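/- Let 𝔫 be the 5-dimensional real Lie algebra with orthonormal basis {E₁,…,E₅} and non-zero brackets [E₁,E₂] = m·E₄, [E₁,E₄] = m·E₅, [E₂,E₃] = (√2/2)m·E₅ with m > 0. Then the diagonal endomorphism D defined by D(E₁) = (3/4)m²·E₁, D(E₂) = m²·E₂, D(E₃) = (3/2)m²·E₃, D(E₄) = (7/4)m²·E₄, D(E₅) = (5/2)m²·E₅ is a derivation of 𝔫, and Ric = −(7/4)m²·Id + D. -/
import Mathlib


open scoped BigOperators

namespace Nilsoliton12

noncomputable section

abbrev V : Type := Fin 5 → ℝ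

/-- The orthonormal basis vectors E₁,…,E₅ (indexed 0,…,4). -/
def E (i : Fin 5) : V := Pi.single i 1

/-- The inner product making `E` an orthonormal basis. -/
def ip (x y : V) : ℝ := ∑ i, x i * y i

/-- `D` is a derivation of the bracket `br`. -/
def IsDerivation (br : V → V → V) (D : V →ₗ[ℝ] V) : Prop :=
  ∀ X Y : V, D (br X Y) = br (D X) Y + br X (D Y)

/-- `Ric` is the Ricci operator of the nilpotent Lie group with left-invariant
metric determined by the bracket `br` and the orthonormal basis `E`. -/
def IsRicci (br : V → V → V) (Ric : V →ₗ[ℝ] V) : Prop :=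
  ∀ X Y : V, ip (Ric X) Y =
      -(1/2) * (∑ i : Fin 5, ip (br X (E i)) (br Y (E i)))
      + (1/4) * (∑ i : Fin 5, ∑ j : Fin 5, ip (br (E i) (E j)) X * ip (br (E i) (E j)) Y)

/-- The bracket: [E₁,E₂] = m·E₄, [E₁,E₄] = m·E₅, [E₂,E₃] = (√2/2)m·E₅. -/
def br (m : ℝ) (X Y : V) : V :=
  (m * (X 0 * Y 1 - X 1 * Y 0)) • E 3 + (m * (X 0 * Y 3 - X 3 * Y 0) + (Real.sqrt 2 / 2) * m * (X 1 * Y 2 - X 2 * Y 1)) • E 4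

set_option maxHeartbeats 2000000 in
theorem stmt12 (m : ℝ) (hm : 0 < m)
    (Ric : V →ₗ[ℝ] V) (hRic : IsRicci (br m) Ric)
    (D : V →ₗ[ℝ] V)
    (hD0 : D (E 0) = ((3/4) * m ^ 2) • E 0)
    (hD1 : D (E 1) = (m ^ 2) • E 1)
    (hD2 : D (E 2) = ((3/2) * m ^ 2) • E 2)
    (hD3 : D (E 3) = ((7/4) * m ^ 2) • E 3)
    (hD4 : D (E 4) = ((5/2) * m ^ 2) • E 4) :
    IsDerivation (br m) D ∧
    Ric = (-(7/4) * m ^ 2) • (LinearMap.id : V →ₗ[ℝ] V) + D := by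

  have hsq : Real.sqrt 2 * Real.sqrt 2 = 2 := Real.mul_self_sqrt (by norm_num)
  have hX : ∀ X : V, X = X 0 • E 0 + X 1 • E 1 + X 2 • E 2 + X 3 • E 3 + X 4 • E 4 := by
    intro X; funext k; fin_cases k <;> simp [E, Pi.single_apply]
  have hDX : ∀ (X : V) (j : Fin 5),
      D X j = ![(3/4)*m^2, m^2, (3/2)*m^2, (7/4)*m^2, (5/2)*m^2] j * X j := by
    intro X j
    have : D X = X 0 • D (E 0) + X 1 • D (E 1) + X 2 • D (E 2) + X 3 • D (E 3) + X 4 • D (E 4) := by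
      conv_lhs => rw [hX X]
      simp [map_add, map_smul]
    rw [this, hD0, hD1, hD2, hD3, hD4]
    fin_cases j <;> simp [E, Pi.single_apply] <;> ring
  constructor
  · intro X Y
    funext j
    have h1 : D (br m X Y) j
        = ![(3/4)*m^2, m^2, (3/2)*m^2, (7/4)*m^2, (5/2)*m^2] j * (br m X Y) j := hDX _ j
    rw [h1]
    simp only [br, Pi.add_apply, Pi.smul_apply, smul_eq_mul, hDX]
    fin_cases j <;> simp [E, Pi.single_apply] <;> ring
  · have hsq2 : Real.sqrt 2 ^ 2 = 2 := Real.sq_sqrt (by norm_num)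
    have key : ∀ (v : V) (l : Fin 5), v l = ip v (E l) := by
      intro v l
      simp [ip, E, Pi.single_apply, mul_ite, Finset.sum_ite_eq']
    have ip1 : ∀ a b c d : ℝ, ip (a • E 3 + b • E 4) (c • E 3 + d • E 4) = a * c + b * d := by
      intro a b c d
      simp [ip, E, Fin.sum_univ_five, Pi.single_apply]
    have ip2 : ∀ (a b : ℝ) (v : V), ip (a • E 3 + b • E 4) v = a * v 3 + b * v 4 := by
      intro a b v
      simp [ip, E, Fin.sum_univ_five, Pi.single_apply]
    have b0 : ∀ Z : V, br m Z (E 0) = (-(m * Z 1)) • E 3 + (-(m * Z 3)) • E 4 := by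
      intro Z; funext k; fin_cases k <;> simp [br, E, Pi.single_apply] <;> ring
    have b1 : ∀ Z : V, br m Z (E 1)
        = (m * Z 0) • E 3 + (-(Real.sqrt 2 / 2 * m * Z 2)) • E 4 := by
      intro Z; funext k; fin_cases k <;> simp [br, E, Pi.single_apply] <;> ring
    have b2 : ∀ Z : V, br m Z (E 2)
        = (0 : ℝ) • E 3 + (Real.sqrt 2 / 2 * m * Z 1) • E 4 := by
      intro Z; funext k; fin_cases k <;> simp [br, E, Pi.single_apply] <;> ring
    have b3 : ∀ Z : V, br m Z (E 3) = (0 : ℝ) • E 3 + (m * Z 0) • E 4 := by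
      intro Z; funext k; fin_cases k <;> simp [br, E, Pi.single_apply] <;> ring
    have b4 : ∀ Z : V, br m Z (E 4) = (0 : ℝ) • E 3 + (0 : ℝ) • E 4 := by
      intro Z; funext k; fin_cases k <;> simp [br, E, Pi.single_apply] <;> ring
    have main : ∀ (X Y : V), ip (Ric X) Y
        = m ^ 2 * (-(X 0 * Y 0) - 3/4 * (X 1 * Y 1) - 1/4 * (X 2 * Y 2)
            + 3/4 * (X 4 * Y 4)) := by
      intro X Y
      rw [hRic]
      have hS1 : (∑ i : Fin 5, ip (br m X (E i)) (br m Y (E i)))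
          = m ^ 2 * (2 * (X 0 * Y 0) + 3/2 * (X 1 * Y 1) + 1/2 * (X 2 * Y 2)
              + X 3 * Y 3) := by
        rw [Fin.sum_univ_five, b0, b0, b1, b1, b2, b2, b3, b3, b4, b4]
        simp only [ip1]
        ring_nf
        rw [hsq2]
        ring
      have hS2 : (∑ i : Fin 5, ∑ j : Fin 5,
            ip (br m (E i) (E j)) X * ip (br m (E i) (E j)) Y)
          = 2 * m ^ 2 * (X 3 * Y 3 + 3/2 * (X 4 * Y 4)) := by
        simp only [Fin.sum_univ_five, b0, b1, b2, b3, b4, ip2]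
        simp only [E, Pi.single_apply]
        norm_num
        simp only [Fin.isValue, Fin.reduceEq, if_false, ite_false, reduceIte]
        ring_nf
        rw [hsq2]
        ring
      rw [hS1, hS2]
      ring
    apply LinearMap.ext
    intro X
    funext l
    rw [key (Ric X) l, main X (E l)]
    simp only [LinearMap.add_apply, LinearMap.smul_apply, LinearMap.id_apply,
      Pi.add_apply, Pi.smul_apply, smul_eq_mul, hDX]
    fin_cases l <;> simp [E, Pi.single_apply] <;> ring

end

end Nilsoliton12
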